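/- Let d ∈ (0,1) and let S_d(θ) = min{θ, d} be debt. Let S : [0,1] → ℝ be any security (nondecreasing, θ − S(θ) nondecreasing, 0 ≤ S(θ) ≤ θ) with neither S_d nor S weakly dominating the other. Then S single-crosses S_d from below, and consequently debt is safer than S. -/
import Mathlib


theorem stmt_14 (d : ℝ) (hd : d ∈ Set.Ioo (0:ℝ) 1) (S : ℝ → ℝ)
    (hmono : MonotoneOn S (Set.Icc (0:ℝ) 1))
    (hfirm : MonotoneOn (fun θ => θ - S θ) (Set.Icc (0:ℝ) 1))
    (hll : ∀ θ ∈ Set.Icc (0:ℝ) 1, 0 ≤ S θ ∧ S θ ≤ θ)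
    (hnd1 : ∃ θ ∈ Set.Icc (0:ℝ) 1, min θ d > S θ)
    (hnd2 : ∃ θ ∈ Set.Icc (0:ℝ) 1, S θ > min θ d) :
    (∃ θbar : ℝ, (∀ θ ∈ Set.Icc (0:ℝ) 1, θ ≤ θbar → min θ d ≥ S θ) ∧
      (∀ θ ∈ Set.Icc (0:ℝ) 1, θ ≥ θbar → S θ ≥ min θ d)) ∧
    (∀ θ ∈ Set.Icc (0:ℝ) 1, ∀ θ' ∈ Set.Icc (0:ℝ) 1,
      min θ d > S θ → S θ' > min θ' d → S θ' ≥ min θ d ∧ min θ' d ≥ S θ) := by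
  obtain ⟨hd0, hd1⟩ := hd
  obtain ⟨θ1, hθ1m, hθ1⟩ := hnd2
  -- θ1 > d and S θ1 > d
  have hθ1d : d < θ1 := by
    by_contra h
    push_neg at h
    have h2 := (hll θ1 hθ1m).2
    rw [min_eq_left h] at hθ1
    linarith
  have hSθ1 : d < S θ1 := by
    rw [min_eq_right hθ1d.le] at hθ1; exact hθ1
  -- Lipschitz bound
  have lip : ∀ x ∈ Set.Icc (0:ℝ) 1, ∀ y ∈ Set.Icc (0:ℝ) 1, x ≤ y →
      S y ≤ S x + (y - x) := by
    intro x hx y hy hxy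
    have := hfirm hx hy hxy
    simp only at this
    linarith
  set B : Set ℝ := {t | t ∈ Set.Icc (0:ℝ) 1 ∧ d ≤ t ∧ d ≤ S t} with hBdef
  have hB1 : θ1 ∈ B := ⟨hθ1m, hθ1d.le, hSθ1.le⟩
  have hBne : B.Nonempty := ⟨θ1, hB1⟩
  have hbdd : BddBelow B := ⟨d, fun t ht => ht.2.1⟩
  set θbar := sInf B with hθbar
  have hbar_ge : d ≤ θbar := le_csInf hBne (fun t ht => ht.2.1)
  have hbar_le1 : θbar ≤ 1 := le_trans (csInf_le hbdd hB1) hθ1m.2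
  -- Claim A: θ ≤ θbar → S θ ≤ d
  have claimA : ∀ θ ∈ Set.Icc (0:ℝ) 1, θ ≤ θbar → S θ ≤ d := by
    intro θ hθ hle
    rcases le_or_gt θ d with h | h
    · exact le_trans (hll θ hθ).2 h
    · -- d < θ ≤ θbar
      refine le_of_forall_pos_le_add ?_
      intro ε hε
      set c := min ε (θ - d) / 2 with hc
      have hc0 : 0 < c := by
        have : 0 < min ε (θ - d) := lt_min hε (by linarith)
        positivity
      have hcε : c < ε := by
        have h1 : min ε (θ - d) ≤ ε := min_le_left _ _
        linarith
      have hcθ : c < θ - d := by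
        have h1 : min ε (θ - d) ≤ θ - d := min_le_right _ _
        linarith
      have htm : θ - c ∈ Set.Icc (0:ℝ) 1 := ⟨by linarith, by linarith [hθ.2]⟩
      have htlt : θ - c < θbar := by linarith
      have hnB : θ - c ∉ B := fun hmem => absurd (csInf_le hbdd hmem) (not_le.mpr htlt)
      have hSd : S (θ - c) < d := by
        by_contra hcon
        push_neg at hcon
        exact hnB ⟨htm, by linarith, hcon⟩
      have := lip (θ - c) htm θ hθ (by linarith)
      linarith
  -- Claim B: θbar ≤ θ → d ≤ S θ
  have claimB : ∀ θ ∈ Set.Icc (0:ℝ) 1, θbar ≤ θ → d ≤ S θ := by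
    intro θ hθ hge
    refine le_of_forall_pos_le_add ?_
    intro ε hε
    obtain ⟨t, htB, htlt⟩ := exists_lt_of_csInf_lt hBne (show θbar < θbar + ε by linarith)
    rcases le_or_gt t θ with h | h
    · have := hmono htB.1 hθ h
      linarith [htB.2.2]
    · have := lip θ hθ t htB.1 h.le
      have hd2 := htB.2.2
      linarith
  constructor
  · refine ⟨θbar, ?_, ?_⟩
    · intro θ hθ hle
      exact le_min (hll θ hθ).2 (claimA θ hθ hle)
    · intro θ hθ hge
      exact le_trans (min_le_right θ d) (claimB θ hθ hge)
  · intro θ hθ θ' hθ' h1 h2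
    have hθ'd : d < θ' := by
      by_contra h
      push_neg at h
      have := (hll θ' hθ').2
      rw [min_eq_left h] at h2
      linarith
    rw [min_eq_right hθ'd.le] at h2 ⊢
    have hmind : min θ d ≤ d := min_le_right _ _
    exact ⟨le_trans hmind h2.le, by linarith⟩
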